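/- Suppose in addition that n_c = n − n_s, the n×n block matrix (S P) is nonsingular, and the smoother is M_s = A_s := S^T A S. Then the convergence factor of the exact TLHB method equals the square of the C.B.S. constant: ‖E_TL‖_A = γ², where γ = ‖A_s^{−1/2} S^T A P A_c^{−1/2}‖_2 with A_c := P^T A P. -/

import Mathlib

open Matrix

/-- Smallest eigenvalue (real spectrum). -/
noncomputable def lamMin {n : ℕ} (M : Matrix (Fin n) (Fin n) ℝ) : ℝ :=
  sInf (spectrum ℝ M)

/-- Largest eigenvalue (real spectrum). -/
noncomputable def lamMax {n : ℕ} (M : Matrix (Fin n) (Fin n) ℝ) : ℝ :=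
  sSup (spectrum ℝ M)

/-- Smallest positive eigenvalue (real spectrum). -/
noncomputable def lamMinPos {n : ℕ} (M : Matrix (Fin n) (Fin n) ℝ) : ℝ :=
  sInf {t : ℝ | t ∈ spectrum ℝ M ∧ 0 < t}

/-- Energy norm of a vector induced by an SPD matrix `A`. -/
noncomputable def eNorm {n : ℕ} (A : Matrix (Fin n) (Fin n) ℝ) (v : Fin n → ℝ) : ℝ :=
  Real.sqrt (v ⬝ᵥ A.mulVec v)

/-- `A`-norm of a matrix `B`: `‖B‖_A = sup_{v ≠ 0} ‖Bv‖_A / ‖v‖_A`. -/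
noncomputable def aNorm {n : ℕ} (A B : Matrix (Fin n) (Fin n) ℝ) : ℝ :=
  sSup {r : ℝ | ∃ v : Fin n → ℝ, v ≠ 0 ∧ r = eNorm A (B.mulVec v) / eNorm A v}

/-- The `A`-orthogonal projection `Π_A = P (Pᵀ A P)⁻¹ Pᵀ A`. -/
noncomputable def proj {n nc : ℕ} (A : Matrix (Fin n) (Fin n) ℝ)
    (P : Matrix (Fin n) (Fin nc) ℝ) : Matrix (Fin n) (Fin n) ℝ :=
  P * (Pᵀ * A * P)⁻¹ * Pᵀ * A

/-- `M̃_s = Msᵀ (Ms + Msᵀ - As)⁻¹ Ms`. -/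
noncomputable def tMs {ns : ℕ} (Ms As : Matrix (Fin ns) (Fin ns) ℝ) :
    Matrix (Fin ns) (Fin ns) ℝ :=
  Msᵀ * (Ms + Msᵀ - As)⁻¹ * Ms

/-- `S M̃_s⁻¹ Sᵀ A`. -/
noncomputable def smoothX {n ns : ℕ} (A : Matrix (Fin n) (Fin n) ℝ)
    (S : Matrix (Fin n) (Fin ns) ℝ) (Ms : Matrix (Fin ns) (Fin ns) ℝ) :
    Matrix (Fin n) (Fin n) ℝ :=
  S * (tMs Ms (Sᵀ * A * S))⁻¹ * Sᵀ * A

/-- `σ_TL = λ_min⁺( S M̃_s⁻¹ Sᵀ A (I - Π_A) )`. -/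
noncomputable def sigmaTL {n ns nc : ℕ} (A : Matrix (Fin n) (Fin n) ℝ)
    (S : Matrix (Fin n) (Fin ns) ℝ) (P : Matrix (Fin n) (Fin nc) ℝ)
    (Ms : Matrix (Fin ns) (Fin ns) ℝ) : ℝ :=
  lamMinPos (smoothX A S Ms * (1 - proj A P))

/-- Exact TLHB iteration matrix. -/
noncomputable def Etl {n ns nc : ℕ} (A : Matrix (Fin n) (Fin n) ℝ)
    (S : Matrix (Fin n) (Fin ns) ℝ) (P : Matrix (Fin n) (Fin nc) ℝ)
    (Ms : Matrix (Fin ns) (Fin ns) ℝ) : Matrix (Fin n) (Fin n) ℝ :=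
  (1 - S * (Msᵀ)⁻¹ * Sᵀ * A) * (1 - proj A P) * (1 - S * Ms⁻¹ * Sᵀ * A)

/-- Inexact TLHB iteration matrix with coarse solver `Bc`. -/
noncomputable def EtlIn {n ns nc : ℕ} (A : Matrix (Fin n) (Fin n) ℝ)
    (S : Matrix (Fin n) (Fin ns) ℝ) (P : Matrix (Fin n) (Fin nc) ℝ)
    (Ms : Matrix (Fin ns) (Fin ns) ℝ) (Bc : Matrix (Fin nc) (Fin nc) ℝ) :
    Matrix (Fin n) (Fin n) ℝ :=
  (1 - S * (Msᵀ)⁻¹ * Sᵀ * A) * (1 - P * Bc⁻¹ * Pᵀ * A) * (1 - S * Ms⁻¹ * Sᵀ * A)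

section Helpers

/-- discriminant: a nonneg quadratic has `b² ≤ 4ac`. -/
lemma quad_nonneg_imp {a b c : ℝ} (h : ∀ t : ℝ, 0 ≤ a + b * t + c * t ^ 2) :
    b ^ 2 ≤ 4 * (a * c) := by
  have := discrim_le_zero (a := c) (b := b) (c := a) (fun x => by
    have := h x; nlinarith [h x])
  rw [discrim] at this
  nlinarith [this]

lemma dot_tA {n m : ℕ} (S : Matrix (Fin n) (Fin m) ℝ) (x : Fin m → ℝ) (w : Fin n → ℝ) :
    (S *ᵥ x) ⬝ᵥ w = x ⬝ᵥ (Sᵀ *ᵥ w) := by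
  rw [dotProduct_mulVec, vecMul_transpose]

lemma ip_symm {n : ℕ} {A : Matrix (Fin n) (Fin n) ℝ} (hAs : Aᵀ = A) (x y : Fin n → ℝ) :
    x ⬝ᵥ A *ᵥ y = y ⬝ᵥ A *ᵥ x := by
  rw [dotProduct_mulVec, ← hAs, vecMul_transpose, dotProduct_comm, hAs]

/-- small perturbation lemma : if `t*d ≤ t²*C` for all small `t`, then `d = 0`. -/
lemma small_t {d C δ : ℝ} (hδ : 0 < δ) (h : ∀ t : ℝ, |t| ≤ δ → t * d ≤ t ^ 2 * C) :
    d = 0 := by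
  by_contra hd
  have habs : 0 < |d| := abs_pos.mpr hd
  set t₀ : ℝ := min δ (|d| / (|C| + 1)) with ht₀
  have hC1 : 0 < |C| + 1 := by positivity
  have ht₀pos : 0 < t₀ := lt_min hδ (by positivity)
  have ht₀le : t₀ ≤ δ := min_le_left _ _
  have ht₀le2 : t₀ ≤ |d| / (|C| + 1) := min_le_right _ _
  -- choose t with sign of d
  set t : ℝ := if 0 < d then t₀ else -t₀ with ht
  have habs_t : |t| ≤ δ := by
    rw [ht]; split <;> simp [abs_of_pos ht₀pos, abs_of_neg (neg_lt_zero.mpr ht₀pos), ht₀le]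
  have htd : t * d = t₀ * |d| := by
    rw [ht]; split
    · rw [abs_of_pos (by assumption)]
    · push_neg at *; rw [abs_of_nonpos (by linarith), neg_mul]; ring
  have hkey := h t habs_t
  have ht2 : t ^ 2 = t₀ ^ 2 := by rw [ht]; split <;> ring
  rw [htd, ht2] at hkey
  have h1 : t₀ ^ 2 * C ≤ t₀ ^ 2 * |C| := by
    have := le_abs_self C
    nlinarith [sq_nonneg t₀]
  have h2 : t₀ ^ 2 * |C| < t₀ * |d| := by
    have : t₀ * |C| < |d| := by
      calc t₀ * |C| ≤ (|d| / (|C| + 1)) * |C| := by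
              apply mul_le_mul_of_nonneg_right ht₀le2 (abs_nonneg C)
        _ < |d| := by
              rw [div_mul_eq_mul_div, div_lt_iff₀ hC1]
              nlinarith [abs_nonneg C, habs]
    nlinarith [ht₀pos]
  linarith

/-- stationarity of a maximizer of a linear functional over an energy sphere. -/
lemma stationarity {m : ℕ} {Q : Matrix (Fin m) (Fin m) ℝ} (hQs : Qᵀ = Q)
    {c : Fin m → ℝ} {γ : ℝ} (hγ : 0 < γ) {vs : Fin m → ℝ}
    (hvs : vs ⬝ᵥ Q *ᵥ vs = 1)
    (hpsd : ∀ a : Fin m → ℝ, 0 ≤ a ⬝ᵥ Q *ᵥ a)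
    (hmax : ∀ a : Fin m → ℝ, a ⬝ᵥ c ≤ γ * Real.sqrt (a ⬝ᵥ Q *ᵥ a))
    (hattain : vs ⬝ᵥ c = γ) :
    c = γ • (Q *ᵥ vs) := by
  have key : ∀ h : Fin m → ℝ, h ⬝ᵥ (c - γ • (Q *ᵥ vs)) = 0 := by
    intro h
    set e : ℝ := h ⬝ᵥ c with he
    set β : ℝ := h ⬝ᵥ Q *ᵥ vs with hβ
    set q : ℝ := h ⬝ᵥ Q *ᵥ h with hq
    have hq0 : 0 ≤ q := hpsd h
    -- expansion of the quadratic form at vs + t h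
    have hexp : ∀ t : ℝ, (vs + t • h) ⬝ᵥ Q *ᵥ (vs + t • h) = 1 + (2 * β) * t + q * t ^ 2 := by
      intro t
      have hsymm : vs ⬝ᵥ Q *ᵥ h = h ⬝ᵥ Q *ᵥ vs := ip_symm hQs vs h
      simp only [mulVec_add, mulVec_smul, dotProduct_add, add_dotProduct,
        dotProduct_smul, smul_dotProduct, smul_eq_mul]
      rw [hvs, hsymm]
      ring
    have hδpos : 0 < γ / (|e| + 1) := by positivity
    have hsq : ∀ t : ℝ, |t| ≤ γ / (|e| + 1) →
        t * (2 * γ * (e - γ * β)) ≤ t ^ 2 * (γ ^ 2 * q - e ^ 2) := by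
      intro t htle
      have hlin : (vs + t • h) ⬝ᵥ c = γ + t * e := by
        simp only [add_dotProduct, smul_dotProduct, smul_eq_mul, hattain, he]
      have hnn : 0 ≤ γ + t * e := by
        have h1 : |t * e| ≤ (γ / (|e| + 1)) * |e| := by
          rw [abs_mul]
          exact mul_le_mul_of_nonneg_right htle (abs_nonneg e)
        have h2 : (γ / (|e| + 1)) * |e| < γ := by
          rw [div_mul_eq_mul_div, div_lt_iff₀ (by positivity)]
          nlinarith [abs_nonneg e, hγ]
        have := neg_abs_le (t * e)
        linarith
      have hmax' := hmax (vs + t • h)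
      rw [hlin, hexp t] at hmax'
      have hqf : (0:ℝ) ≤ 1 + (2*β) * t + q * t ^ 2 := by
        rw [← hexp t]; exact hpsd _
      have hsq2 : (γ + t * e) ^ 2 ≤ γ ^ 2 * (1 + (2*β) * t + q * t ^ 2) := by
        have h1 : (γ + t * e) ^ 2 ≤ (γ * Real.sqrt (1 + (2*β) * t + q * t ^ 2)) ^ 2 := by
          apply pow_le_pow_left₀ hnn hmax'
        calc (γ + t * e) ^ 2 ≤ (γ * Real.sqrt (1 + (2*β) * t + q * t ^ 2)) ^ 2 := h1
          _ = γ ^ 2 * (1 + (2*β) * t + q * t ^ 2) := by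
              rw [mul_pow, Real.sq_sqrt hqf]
      nlinarith [hsq2]
    have hz := small_t hδpos hsq
    have hez : e - γ * β = 0 := by
      have : 2 * γ * (e - γ * β) = 0 := hz
      rcases mul_eq_zero.mp this with h | h
      · exfalso; nlinarith
      · exact h
    have : h ⬝ᵥ (c - γ • (Q *ᵥ vs)) = e - γ * β := by
      simp only [dotProduct_sub, dotProduct_smul, smul_eq_mul, he, hβ]
    rw [this, hez]
  exact sub_eq_zero.mp (dotProduct_self_eq_zero.mp (key (c - γ • (Q *ᵥ vs))))

end Helpers

lemma dot_tA' {n m : ℕ} (S : Matrix (Fin n) (Fin m) ℝ) (x : Fin m → ℝ) (w : Fin n → ℝ) :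
    (S *ᵥ x) ⬝ᵥ w = x ⬝ᵥ (Sᵀ *ᵥ w) := by
  rw [dotProduct_mulVec, vecMul_transpose]

lemma ip_selfadj {n : ℕ} {A M : Matrix (Fin n) (Fin n) ℝ} (h : Mᵀ * A = A * M)
    (x y : Fin n → ℝ) : (M *ᵥ x) ⬝ᵥ A *ᵥ y = x ⬝ᵥ A *ᵥ (M *ᵥ y) := by
  rw [dot_tA' M x (A *ᵥ y), mulVec_mulVec, h, ← mulVec_mulVec]

lemma cont_bil {m k : ℕ} (M : Matrix (Fin m) (Fin k) ℝ) :
    Continuous fun p : (Fin m → ℝ) × (Fin k → ℝ) => p.1 ⬝ᵥ M *ᵥ p.2 := by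
  unfold dotProduct mulVec
  dsimp only
  apply continuous_finset_sum
  intro i _
  apply Continuous.mul
  · exact (continuous_apply i).comp continuous_fst
  · apply continuous_finset_sum
    intro j _
    exact continuous_const.mul ((continuous_apply j).comp continuous_snd)

lemma cont_qf {m : ℕ} (M : Matrix (Fin m) (Fin m) ℝ) :
    Continuous fun a : Fin m → ℝ => a ⬝ᵥ M *ᵥ a :=
  (cont_bil M).comp (continuous_id.prodMk continuous_id)

lemma dot_self_nonneg {m : ℕ} (a : Fin m → ℝ) : 0 ≤ a ⬝ᵥ a :=
  Finset.sum_nonneg fun i _ => mul_self_nonneg (a i)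

lemma dot_self_pos {m : ℕ} {a : Fin m → ℝ} (ha : a ≠ 0) : 0 < a ⬝ᵥ a :=
  lt_of_le_of_ne (dot_self_nonneg a) (fun h => ha (dotProduct_self_eq_zero.mp h.symm))

lemma cont_dot {m : ℕ} : Continuous fun a : Fin m → ℝ => a ⬝ᵥ a := by
  unfold dotProduct
  apply continuous_finset_sum
  intro i _
  exact (continuous_apply i).mul (continuous_apply i)

lemma coercive {m : ℕ} (M : Matrix (Fin m) (Fin m) ℝ)
    (hpos : ∀ a : Fin m → ℝ, a ≠ 0 → 0 < a ⬝ᵥ M *ᵥ a) :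
    ∃ c > 0, ∀ a : Fin m → ℝ, c * (a ⬝ᵥ a) ≤ a ⬝ᵥ M *ᵥ a := by
  rcases Nat.eq_zero_or_pos m with hm | hm
  · refine ⟨1, one_pos, fun a => ?_⟩
    subst hm
    have : a = 0 := Subsingleton.elim a 0
    simp [this]
  · -- euclidean sphere
    set Se : Set (Fin m → ℝ) := {a | a ⬝ᵥ a = 1} with hSe
    have hclosed : IsClosed Se := isClosed_eq cont_dot continuous_const
    have hbdd : Bornology.IsBounded Se := by
      rw [Metric.isBounded_iff_subset_closedBall 0]
      refine ⟨1, fun a ha => ?_⟩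
      simp only [Metric.mem_closedBall, dist_zero_right]
      rw [pi_norm_le_iff_of_nonneg zero_le_one]
      intro i
      have ha' : a ⬝ᵥ a = 1 := ha
      have h1 : a i * a i ≤ 1 := by
        have := Finset.single_le_sum (f := fun j => a j * a j)
          (fun j _ => mul_self_nonneg (a j)) (Finset.mem_univ i)
        have h2 : a i * a i ≤ a ⬝ᵥ a := this
        rw [ha'] at h2
        exact h2
      rw [Real.norm_eq_abs]
      nlinarith [abs_nonneg (a i), sq_abs (a i)]
    have hcompact : IsCompact Se := Metric.isCompact_of_isClosed_isBounded hclosed hbdd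
    have hne : Se.Nonempty := by
      refine ⟨Pi.single ⟨0, hm⟩ 1, ?_⟩
      simp [hSe, dotProduct, Pi.single_apply]
    obtain ⟨a₀, ha₀, hmin⟩ := hcompact.exists_isMinOn hne (cont_qf M).continuousOn
    have ha₀ne : a₀ ≠ 0 := by
      intro h
      rw [h] at ha₀
      simp [hSe, dotProduct] at ha₀
    refine ⟨a₀ ⬝ᵥ M *ᵥ a₀, hpos a₀ ha₀ne, fun a => ?_⟩
    rcases eq_or_ne a 0 with rfl | ha
    · simp
    · have hd : 0 < a ⬝ᵥ a := dot_self_pos ha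
      set t : ℝ := Real.sqrt (a ⬝ᵥ a) with ht
      have htpos : 0 < t := Real.sqrt_pos.mpr hd
      have ht2 : t ^ 2 = a ⬝ᵥ a := Real.sq_sqrt hd.le
      have hmem : (t⁻¹ • a) ∈ Se := by
        show (t⁻¹ • a) ⬝ᵥ (t⁻¹ • a) = 1
        rw [smul_dotProduct, dotProduct_smul, smul_eq_mul, smul_eq_mul, ← ht2, pow_two]
        field_simp
      have hmin' : a₀ ⬝ᵥ M *ᵥ a₀ ≤ (t⁻¹ • a) ⬝ᵥ M *ᵥ (t⁻¹ • a) := hmin hmem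
      have hqa' : (t⁻¹ • a) ⬝ᵥ M *ᵥ (t⁻¹ • a) = t⁻¹ * t⁻¹ * (a ⬝ᵥ M *ᵥ a) := by
        rw [mulVec_smul, smul_dotProduct, dotProduct_smul, smul_eq_mul, smul_eq_mul]
        ring
      rw [hqa'] at hmin'
      have htne : t ≠ 0 := ne_of_gt htpos
      have h3 := mul_le_mul_of_nonneg_right hmin' (mul_self_nonneg t)
      have h4 : t⁻¹ * t⁻¹ * (a ⬝ᵥ M *ᵥ a) * (t * t) = a ⬝ᵥ M *ᵥ a := by
        field_simp
      rw [← ht2, pow_two]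
      calc (a₀ ⬝ᵥ M *ᵥ a₀) * (t * t) ≤ t⁻¹ * t⁻¹ * (a ⬝ᵥ M *ᵥ a) * (t * t) := h3
        _ = a ⬝ᵥ M *ᵥ a := h4

lemma compact_esphere {m : ℕ} (M : Matrix (Fin m) (Fin m) ℝ)
    (hpos : ∀ a : Fin m → ℝ, a ≠ 0 → 0 < a ⬝ᵥ M *ᵥ a) :
    IsCompact {a : Fin m → ℝ | a ⬝ᵥ M *ᵥ a = 1} := by
  obtain ⟨c, hc, hcoer⟩ := coercive M hpos
  apply Metric.isCompact_of_isClosed_isBounded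
  · exact isClosed_eq (cont_qf M) continuous_const
  · rw [Metric.isBounded_iff_subset_closedBall 0]
    refine ⟨Real.sqrt (1 / c), fun a ha => ?_⟩
    simp only [Metric.mem_closedBall, dist_zero_right]
    have ha' : a ⬝ᵥ M *ᵥ a = 1 := ha
    have hd : a ⬝ᵥ a ≤ 1 / c := by
      have h1 := hcoer a
      rw [ha'] at h1
      rw [le_div_iff₀ hc, mul_comm]
      exact h1
    rw [pi_norm_le_iff_of_nonneg (Real.sqrt_nonneg _)]
    intro i
    have h1 : a i * a i ≤ a ⬝ᵥ a :=
      Finset.single_le_sum (f := fun j => a j * a j)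
        (fun j _ => mul_self_nonneg (a j)) (Finset.mem_univ i)
    rw [Real.norm_eq_abs, ← Real.sqrt_sq_eq_abs]
    apply Real.sqrt_le_sqrt
    nlinarith

lemma dot_tA'' {n m : ℕ} (S : Matrix (Fin n) (Fin m) ℝ) (x : Fin m → ℝ) (w : Fin n → ℝ) :
    (S *ᵥ x) ⬝ᵥ w = x ⬝ᵥ (Sᵀ *ᵥ w) := by
  rw [dotProduct_mulVec, vecMul_transpose]

lemma posdef_conj {n m : ℕ} {A : Matrix (Fin n) (Fin n) ℝ} (hA : A.PosDef)
    (S : Matrix (Fin n) (Fin m) ℝ) (hS : ∀ a : Fin m → ℝ, a ≠ 0 → S *ᵥ a ≠ 0) :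
    (Sᵀ * A * S).PosDef := by
  have hAs : Aᵀ = A := hA.isHermitian
  refine Matrix.PosDef.of_dotProduct_mulVec_pos ?_ ?_
  · show (Sᵀ * A * S)ᵀ = _
    simp [Matrix.transpose_mul, Matrix.mul_assoc, hAs]
  · intro a ha
    show 0 < star a ⬝ᵥ _
    have hsa : star a = a := rfl
    have h1 : (Sᵀ * A * S) *ᵥ a = Sᵀ *ᵥ (A *ᵥ (S *ᵥ a)) := by
      rw [mulVec_mulVec, mulVec_mulVec]
    rw [hsa, h1, ← dot_tA'']
    exact hA.dotProduct_mulVec_pos (hS a ha)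

/-- consequences of full rank of the square matrix `(S P)`. -/
lemma rank_inj_surj {n ns nc : ℕ} (S : Matrix (Fin n) (Fin ns) ℝ)
    (P : Matrix (Fin n) (Fin nc) ℝ) (hsq : ns + nc = n)
    (hSP : (fromCols S P).rank = n) :
    (∀ (a : Fin ns → ℝ) (b : Fin nc → ℝ), S *ᵥ a + P *ᵥ b = 0 → a = 0 ∧ b = 0) ∧
    (∀ u : Fin n → ℝ, ∃ (a : Fin ns → ℝ) (b : Fin nc → ℝ), u = S *ᵥ a + P *ᵥ b) := by
  set L := (fromCols S P).mulVecLin with hL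
  have hrange : LinearMap.range L = ⊤ := by
    apply Submodule.eq_top_of_finrank_eq
    show (fromCols S P).rank = _
    rw [hSP, Module.finrank_pi]
    simp
  have hkerfr : Module.finrank ℝ (LinearMap.ker L) = 0 := by
    have hrn := LinearMap.finrank_range_add_finrank_ker L
    have hdom : Module.finrank ℝ ((Fin ns ⊕ Fin nc) → ℝ) = n := by
      rw [Module.finrank_pi]
      simp [hsq]
    rw [hdom] at hrn
    have : Module.finrank ℝ (LinearMap.range L) = n := by
      show (fromCols S P).rank = n
      exact hSP
    omega
  have hker : LinearMap.ker L = ⊥ :=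
    Submodule.finrank_eq_zero.mp hkerfr
  have hinj : Function.Injective L := LinearMap.ker_eq_bot.mp hker
  have happ : ∀ (a : Fin ns → ℝ) (b : Fin nc → ℝ), L (Sum.elim a b) = S *ᵥ a + P *ᵥ b := by
    intro a b
    show (fromCols S P) *ᵥ (Sum.elim a b) = _
    exact fromCols_mulVec_sumElim S P a b
  constructor
  · intro a b hab
    have h0 : L (Sum.elim a b) = L 0 := by
      rw [happ, hab, map_zero]
    have := hinj h0
    constructor
    · funext i; exact congrFun this (Sum.inl i)
    · funext i; exact congrFun this (Sum.inr i)
  · intro u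
    have : u ∈ LinearMap.range L := by rw [hrange]; trivial
    obtain ⟨x, hx⟩ := this
    refine ⟨x ∘ Sum.inl, x ∘ Sum.inr, ?_⟩
    have hxe : Sum.elim (x ∘ Sum.inl) (x ∘ Sum.inr) = x := by
      funext i; cases i <;> rfl
    rw [← happ, hxe, hx]

section MatIdent
variable {n m : ℕ} (A : Matrix (Fin n) (Fin n) ℝ) (S : Matrix (Fin n) (Fin m) ℝ)

lemma key_assoc (X : Matrix (Fin m) (Fin n) ℝ) :
    Sᵀ * (A * (S * X)) = (Sᵀ * A * S) * X := by
  simp only [Matrix.mul_assoc]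

lemma Q_idem (h : IsUnit (Sᵀ * A * S).det) :
    (S * (Sᵀ * A * S)⁻¹ * Sᵀ * A) * (S * (Sᵀ * A * S)⁻¹ * Sᵀ * A)
      = S * (Sᵀ * A * S)⁻¹ * Sᵀ * A := by
  set B := (Sᵀ * A * S)⁻¹ with hB
  have h1 : B * (Sᵀ * A * S) = 1 := by rw [hB]; exact Matrix.nonsing_inv_mul _ h
  simp only [Matrix.mul_assoc]
  rw [key_assoc A S (B * (Sᵀ * A)), ← Matrix.mul_assoc B, h1, Matrix.one_mul]

lemma SAQ (h : IsUnit (Sᵀ * A * S).det) :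
    Sᵀ * A * (S * (Sᵀ * A * S)⁻¹ * Sᵀ * A) = Sᵀ * A := by
  set B := (Sᵀ * A * S)⁻¹ with hB
  have h1 : (Sᵀ * A * S) * B = 1 := by rw [hB]; exact Matrix.mul_nonsing_inv _ h
  simp only [Matrix.mul_assoc]
  rw [key_assoc A S (B * (Sᵀ * A)), ← Matrix.mul_assoc, h1, Matrix.one_mul]

lemma Q_fix (h : IsUnit (Sᵀ * A * S).det) :
    (S * (Sᵀ * A * S)⁻¹ * Sᵀ * A) * S = S := by
  set B := (Sᵀ * A * S)⁻¹ with hB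
  have h1 : B * (Sᵀ * A * S) = 1 := by rw [hB]; exact Matrix.nonsing_inv_mul _ h
  simp only [Matrix.mul_assoc]
  rw [← Matrix.mul_assoc Sᵀ A S, h1, Matrix.mul_one]

lemma QtA (hAs : Aᵀ = A) :
    (S * (Sᵀ * A * S)⁻¹ * Sᵀ * A)ᵀ * A = A * (S * (Sᵀ * A * S)⁻¹ * Sᵀ * A) := by
  have hAss : (Sᵀ * A * S)ᵀ = Sᵀ * A * S := by
    simp [Matrix.transpose_mul, Matrix.mul_assoc, hAs]
  simp only [Matrix.transpose_mul, Matrix.transpose_transpose, Matrix.transpose_nonsing_inv,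
    hAss, hAs, Matrix.mul_assoc]

end MatIdent

lemma esphere_nonempty {m : ℕ} (M : Matrix (Fin m) (Fin m) ℝ)
    (hpos : ∀ a : Fin m → ℝ, a ≠ 0 → 0 < a ⬝ᵥ M *ᵥ a) (hm : 0 < m) :
    {a : Fin m → ℝ | a ⬝ᵥ M *ᵥ a = 1}.Nonempty := by
  set a₀ : Fin m → ℝ := Pi.single ⟨0, hm⟩ 1 with ha₀def
  have ha₀ : a₀ ≠ 0 := by
    intro h
    have := congrFun h ⟨0, hm⟩
    simp [ha₀def] at this
  set t : ℝ := Real.sqrt (a₀ ⬝ᵥ M *ᵥ a₀) with ht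
  have htpos : 0 < t := Real.sqrt_pos.mpr (hpos a₀ ha₀)
  have ht2 : t ^ 2 = a₀ ⬝ᵥ M *ᵥ a₀ := Real.sq_sqrt (hpos a₀ ha₀).le
  refine ⟨t⁻¹ • a₀, ?_⟩
  show (t⁻¹ • a₀) ⬝ᵥ M *ᵥ (t⁻¹ • a₀) = 1
  rw [mulVec_smul, smul_dotProduct, dotProduct_smul, smul_eq_mul, smul_eq_mul, ← ht2, pow_two]
  field_simp

set_option maxHeartbeats 1000000 in
/-- If `(S P)` is square (`n_s + n_c = n`) and nonsingular, and the smoother is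
`M_s = A_s = Sᵀ A S`, then `‖E_TL‖_A = γ²`, where `γ` is the C.B.S. constant. -/
theorem exact_tlhb_cbs {n ns nc : ℕ}
    (A : Matrix (Fin n) (Fin n) ℝ) (hA : A.PosDef)
    (S : Matrix (Fin n) (Fin ns) ℝ) (hS : S.rank = ns)
    (P : Matrix (Fin n) (Fin nc) ℝ) (hP : P.rank = nc)
    (hnc : nc = n - ns) (hsq : ns + nc = n)
    (hSP : (fromCols S P).rank = n) :
    aNorm A ((1 - S * (Sᵀ * A * S)⁻¹ * Sᵀ * A) * (1 - proj A P) *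
        (1 - S * (Sᵀ * A * S)⁻¹ * Sᵀ * A)) =
      (sSup {r : ℝ | ∃ vs : Fin ns → ℝ, ∃ vc : Fin nc → ℝ, vs ≠ 0 ∧ vc ≠ 0 ∧
        r = vs ⬝ᵥ (Sᵀ * A * P).mulVec vc /
          Real.sqrt ((vs ⬝ᵥ (Sᵀ * A * S).mulVec vs) * (vc ⬝ᵥ (Pᵀ * A * P).mulVec vc))}) ^ 2 := by
  classical
  rcases Nat.eq_zero_or_pos n with hn0 | hn
  · have hns0 : ns = 0 := by omega
    have hnc0 : nc = 0 := by omega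
    subst hn0; subst hns0; subst hnc0
    have key : ∀ s : Set ℝ, (∀ r ∈ s, False) → sSup s = 0 := fun s h => by
      rw [Set.eq_empty_iff_forall_notMem.mpr h, Real.sSup_empty]
    unfold aNorm
    rw [key _ (by rintro r ⟨v, hv, -⟩; exact hv (funext fun i => i.elim0)),
      key _ (by rintro r ⟨vs, vc, hvs, -, -⟩; exact hvs (funext fun i => i.elim0))]
    norm_num
  have hAs : Aᵀ = A := hA.isHermitian
  have hnn : ∀ z : Fin n → ℝ, 0 ≤ z ⬝ᵥ A *ᵥ z := fun z => hA.posSemidef.dotProduct_mulVec_nonneg z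
  obtain ⟨hinj, hsurj⟩ := rank_inj_surj S P hsq hSP
  have hSinj : ∀ a : Fin ns → ℝ, a ≠ 0 → S *ᵥ a ≠ 0 := by
    intro a ha hcon
    exact ha (hinj a 0 (by simp [hcon])).1
  have hPinj : ∀ b : Fin nc → ℝ, b ≠ 0 → P *ᵥ b ≠ 0 := by
    intro b hb hcon
    exact hb (hinj 0 b (by simp [hcon])).2
  have hA11 : (Sᵀ * A * S).PosDef := posdef_conj hA S hSinj
  have hA22 : (Pᵀ * A * P).PosDef := posdef_conj hA P hPinj
  have hA11u : IsUnit (Sᵀ * A * S).det := isUnit_iff_ne_zero.mpr (ne_of_gt hA11.det_pos)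
  have hA22u : IsUnit (Pᵀ * A * P).det := isUnit_iff_ne_zero.mpr (ne_of_gt hA22.det_pos)
  -- conversion lemmas between block quadratic forms and A-forms
  have hconv1 : ∀ a : Fin ns → ℝ, a ⬝ᵥ (Sᵀ * A * S) *ᵥ a = (S *ᵥ a) ⬝ᵥ A *ᵥ (S *ᵥ a) := by
    intro a
    rw [show (Sᵀ * A * S) *ᵥ a = Sᵀ *ᵥ (A *ᵥ (S *ᵥ a)) by simp only [mulVec_mulVec, Matrix.mul_assoc], ← dot_tA]
  have hconv2 : ∀ b : Fin nc → ℝ, b ⬝ᵥ (Pᵀ * A * P) *ᵥ b = (P *ᵥ b) ⬝ᵥ A *ᵥ (P *ᵥ b) := by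
    intro b
    rw [show (Pᵀ * A * P) *ᵥ b = Pᵀ *ᵥ (A *ᵥ (P *ᵥ b)) by simp only [mulVec_mulVec, Matrix.mul_assoc], ← dot_tA]
  have hconv12 : ∀ (a : Fin ns → ℝ) (b : Fin nc → ℝ),
      a ⬝ᵥ (Sᵀ * A * P) *ᵥ b = (S *ᵥ a) ⬝ᵥ A *ᵥ (P *ᵥ b) := by
    intro a b
    rw [show (Sᵀ * A * P) *ᵥ b = Sᵀ *ᵥ (A *ᵥ (P *ᵥ b)) by simp only [mulVec_mulVec, Matrix.mul_assoc], ← dot_tA]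
  -- Cauchy-Schwarz in the A-inner product
  have hCS : ∀ x y : Fin n → ℝ,
      (x ⬝ᵥ A *ᵥ y) ^ 2 ≤ (x ⬝ᵥ A *ᵥ x) * (y ⬝ᵥ A *ᵥ y) := by
    intro x y
    have hexp : ∀ t : ℝ,
        0 ≤ (x ⬝ᵥ A *ᵥ x) + (2 * (x ⬝ᵥ A *ᵥ y)) * t + (y ⬝ᵥ A *ᵥ y) * t ^ 2 := by
      intro t
      have h0 := hnn (x + t • y)
      have hsymm := ip_symm hAs y x
      simp only [mulVec_add, mulVec_smul, dotProduct_add, add_dotProduct,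
        dotProduct_smul, smul_dotProduct, smul_eq_mul] at h0
      rw [hsymm] at h0
      nlinarith [h0]
    have := quad_nonneg_imp hexp
    nlinarith [this]
  -- the CBS set and constant
  set Γ : Set ℝ := {r : ℝ | ∃ vs : Fin ns → ℝ, ∃ vc : Fin nc → ℝ, vs ≠ 0 ∧ vc ≠ 0 ∧
        r = vs ⬝ᵥ (Sᵀ * A * P).mulVec vc /
          Real.sqrt ((vs ⬝ᵥ (Sᵀ * A * S).mulVec vs) * (vc ⬝ᵥ (Pᵀ * A * P).mulVec vc))} with hΓ
  set γ : ℝ := sSup Γ with hγdef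
  have hd1pos : ∀ vs : Fin ns → ℝ, vs ≠ 0 → 0 < vs ⬝ᵥ (Sᵀ * A * S) *ᵥ vs :=
    fun vs h => hA11.dotProduct_mulVec_pos h
  have hd2pos : ∀ vc : Fin nc → ℝ, vc ≠ 0 → 0 < vc ⬝ᵥ (Pᵀ * A * P) *ᵥ vc :=
    fun vc h => hA22.dotProduct_mulVec_pos h
  have hΓub1 : ∀ r ∈ Γ, r ≤ 1 := by
    rintro r ⟨vs, vc, hvs, hvc, rfl⟩
    have hnum2 : (vs ⬝ᵥ (Sᵀ * A * P) *ᵥ vc) ^ 2 ≤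
        (vs ⬝ᵥ (Sᵀ * A * S) *ᵥ vs) * (vc ⬝ᵥ (Pᵀ * A * P) *ᵥ vc) := by
      rw [hconv12, hconv1, hconv2]
      exact hCS _ _
    have hdpos : 0 < (vs ⬝ᵥ (Sᵀ * A * S) *ᵥ vs) * (vc ⬝ᵥ (Pᵀ * A * P) *ᵥ vc) :=
      mul_pos (hd1pos vs hvs) (hd2pos vc hvc)
    rw [div_le_one (Real.sqrt_pos.mpr hdpos)]
    calc vs ⬝ᵥ (Sᵀ * A * P) *ᵥ vc ≤ |vs ⬝ᵥ (Sᵀ * A * P) *ᵥ vc| := le_abs_self _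
      _ = Real.sqrt ((vs ⬝ᵥ (Sᵀ * A * P) *ᵥ vc) ^ 2) := (Real.sqrt_sq_eq_abs _).symm
      _ ≤ Real.sqrt ((vs ⬝ᵥ (Sᵀ * A * S) *ᵥ vs) * (vc ⬝ᵥ (Pᵀ * A * P) *ᵥ vc)) :=
          Real.sqrt_le_sqrt hnum2
  have hΓbdd : BddAbove Γ := ⟨1, fun r hr => hΓub1 r hr⟩
  have hCBS : ∀ (a : Fin ns → ℝ) (b : Fin nc → ℝ), a ⬝ᵥ (Sᵀ * A * P) *ᵥ b ≤
      γ * (Real.sqrt (a ⬝ᵥ (Sᵀ * A * S) *ᵥ a) * Real.sqrt (b ⬝ᵥ (Pᵀ * A * P) *ᵥ b)) := by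
    intro a b
    rcases eq_or_ne a 0 with rfl | ha
    · simp
    rcases eq_or_ne b 0 with rfl | hb
    · simp
    have hmem : (a ⬝ᵥ (Sᵀ * A * P) *ᵥ b /
        Real.sqrt ((a ⬝ᵥ (Sᵀ * A * S) *ᵥ a) * (b ⬝ᵥ (Pᵀ * A * P) *ᵥ b))) ∈ Γ :=
      ⟨a, b, ha, hb, rfl⟩
    have hle := le_csSup hΓbdd hmem
    have hdpos : 0 < (a ⬝ᵥ (Sᵀ * A * S) *ᵥ a) * (b ⬝ᵥ (Pᵀ * A * P) *ᵥ b) :=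
      mul_pos (hd1pos a ha) (hd2pos b hb)
    rw [div_le_iff₀ (Real.sqrt_pos.mpr hdpos)] at hle
    calc a ⬝ᵥ (Sᵀ * A * P) *ᵥ b
        ≤ γ * Real.sqrt ((a ⬝ᵥ (Sᵀ * A * S) *ᵥ a) * (b ⬝ᵥ (Pᵀ * A * P) *ᵥ b)) := hle
      _ = γ * (Real.sqrt (a ⬝ᵥ (Sᵀ * A * S) *ᵥ a) * Real.sqrt (b ⬝ᵥ (Pᵀ * A * P) *ᵥ b)) := by
          rw [Real.sqrt_mul (hd1pos a ha).le]
  have hcase : (0 ≤ γ ∧ γ < 1) ∧ (0 < γ → ∃ (vs : Fin ns → ℝ) (vc : Fin nc → ℝ),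
      vs ⬝ᵥ (Sᵀ * A * S) *ᵥ vs = 1 ∧ vc ⬝ᵥ (Pᵀ * A * P) *ᵥ vc = 1 ∧
      vs ⬝ᵥ (Sᵀ * A * P) *ᵥ vc = γ) := by
    by_cases hnsc : ns = 0 ∨ nc = 0
    · have hΓe : Γ = ∅ := by
        rw [Set.eq_empty_iff_forall_notMem]
        rintro r ⟨vs, vc, hvs, hvc, -⟩
        rcases hnsc with h | h
        · subst h; exact hvs (funext fun i => i.elim0)
        · subst h; exact hvc (funext fun i => i.elim0)
      have hγ0 : γ = 0 := by rw [hγdef, hΓe, Real.sSup_empty]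
      refine ⟨⟨by rw [hγ0], by rw [hγ0]; norm_num⟩, fun h => absurd h (by rw [hγ0]; norm_num)⟩
    · push_neg at hnsc
      have hns' : 0 < ns := Nat.pos_of_ne_zero hnsc.1
      have hnc' : 0 < nc := Nat.pos_of_ne_zero hnsc.2
      have hK1 : IsCompact {a : Fin ns → ℝ | a ⬝ᵥ (Sᵀ * A * S) *ᵥ a = 1} :=
        compact_esphere _ hd1pos
      have hK2 : IsCompact {b : Fin nc → ℝ | b ⬝ᵥ (Pᵀ * A * P) *ᵥ b = 1} :=
        compact_esphere _ hd2pos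
      have hK1ne := esphere_nonempty _ hd1pos hns'
      have hK2ne := esphere_nonempty _ hd2pos hnc'
      obtain ⟨⟨vs, vc⟩, hmemK, hmax⟩ := (hK1.prod hK2).exists_isMaxOn (hK1ne.prod hK2ne)
        (cont_bil (Sᵀ * A * P)).continuousOn
      have hvs1 : vs ⬝ᵥ (Sᵀ * A * S) *ᵥ vs = 1 := hmemK.1
      have hvc1 : vc ⬝ᵥ (Pᵀ * A * P) *ᵥ vc = 1 := hmemK.2
      have hvs0 : vs ≠ 0 := by
        intro h; rw [h] at hvs1; simp at hvs1
      have hvc0 : vc ≠ 0 := by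
        intro h; rw [h] at hvc1; simp at hvc1
      have hmax' : ∀ (a : Fin ns → ℝ) (b : Fin nc → ℝ),
          a ⬝ᵥ (Sᵀ * A * S) *ᵥ a = 1 → b ⬝ᵥ (Pᵀ * A * P) *ᵥ b = 1 →
          a ⬝ᵥ (Sᵀ * A * P) *ᵥ b ≤ vs ⬝ᵥ (Sᵀ * A * P) *ᵥ vc := by
        intro a b ha hb
        exact hmax (Set.mk_mem_prod ha hb)
      have hIG : IsGreatest Γ (vs ⬝ᵥ (Sᵀ * A * P) *ᵥ vc) := by
        constructor
        · exact ⟨vs, vc, hvs0, hvc0, by rw [hvs1, hvc1]; norm_num⟩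
        · rintro r ⟨a, b, ha, hb, rfl⟩
          have hd1 := hd1pos a ha
          have hd2 := hd2pos b hb
          have hα : (0:ℝ) < Real.sqrt (a ⬝ᵥ (Sᵀ * A * S) *ᵥ a) := Real.sqrt_pos.mpr hd1
          have hβ : (0:ℝ) < Real.sqrt (b ⬝ᵥ (Pᵀ * A * P) *ᵥ b) := Real.sqrt_pos.mpr hd2
          set α := Real.sqrt (a ⬝ᵥ (Sᵀ * A * S) *ᵥ a) with hαd
          set β := Real.sqrt (b ⬝ᵥ (Pᵀ * A * P) *ᵥ b) with hβd
          have hα2 : α ^ 2 = a ⬝ᵥ (Sᵀ * A * S) *ᵥ a := Real.sq_sqrt hd1.le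
          have hβ2 : β ^ 2 = b ⬝ᵥ (Pᵀ * A * P) *ᵥ b := Real.sq_sqrt hd2.le
          have hqa : (α⁻¹ • a) ⬝ᵥ (Sᵀ * A * S) *ᵥ (α⁻¹ • a) = 1 := by
            rw [mulVec_smul, smul_dotProduct, dotProduct_smul, smul_eq_mul, smul_eq_mul,
              ← hα2, pow_two]
            field_simp
          have hqb : (β⁻¹ • b) ⬝ᵥ (Pᵀ * A * P) *ᵥ (β⁻¹ • b) = 1 := by
            rw [mulVec_smul, smul_dotProduct, dotProduct_smul, smul_eq_mul, smul_eq_mul,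
              ← hβ2, pow_two]
            field_simp
          have hle := hmax' _ _ hqa hqb
          have hval : (α⁻¹ • a) ⬝ᵥ (Sᵀ * A * P) *ᵥ (β⁻¹ • b)
              = α⁻¹ * β⁻¹ * (a ⬝ᵥ (Sᵀ * A * P) *ᵥ b) := by
            rw [mulVec_smul, smul_dotProduct, dotProduct_smul, smul_eq_mul, smul_eq_mul]
            ring
          rw [hval] at hle
          rw [Real.sqrt_mul hd1.le, ← hαd, ← hβd, div_le_iff₀ (by positivity)]
          calc a ⬝ᵥ (Sᵀ * A * P) *ᵥ b
              = (α⁻¹ * β⁻¹ * (a ⬝ᵥ (Sᵀ * A * P) *ᵥ b)) * (α * β) := by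
                field_simp
            _ ≤ (vs ⬝ᵥ (Sᵀ * A * P) *ᵥ vc) * (α * β) := by
                apply mul_le_mul_of_nonneg_right hle (by positivity)
      have hγeq : γ = vs ⬝ᵥ (Sᵀ * A * P) *ᵥ vc := by
        rw [hγdef]; exact hIG.csSup_eq
      have hγ0 : 0 ≤ γ := by
        have hnegmem : (-vs) ⬝ᵥ (Sᵀ * A * S) *ᵥ (-vs) = 1 := by
          rw [mulVec_neg, dotProduct_neg, neg_dotProduct, neg_neg, hvs1]
        have := hmax' (-vs) vc hnegmem hvc1
        rw [neg_dotProduct] at this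
        rw [hγeq]
        linarith
      have hγlt1 : γ < 1 := by
        rcases lt_or_eq_of_le (hΓub1 _ hIG.1) with h | h
        · rw [hγeq]; exact h
        · exfalso
          have hss : (S *ᵥ vs) ⬝ᵥ A *ᵥ (S *ᵥ vs) = 1 := by rw [← hconv1, hvs1]
          have hpp : (P *ᵥ vc) ⬝ᵥ A *ᵥ (P *ᵥ vc) = 1 := by rw [← hconv2, hvc1]
          have hsp : (S *ᵥ vs) ⬝ᵥ A *ᵥ (P *ᵥ vc) = 1 := by rw [← hconv12, h]
          have hps : (P *ᵥ vc) ⬝ᵥ A *ᵥ (S *ᵥ vs) = 1 := by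
            rw [ip_symm hAs]; exact hsp
          have hww : (S *ᵥ vs - P *ᵥ vc) ⬝ᵥ A *ᵥ (S *ᵥ vs - P *ᵥ vc) = 0 := by
            simp only [mulVec_sub, dotProduct_sub, sub_dotProduct]
            rw [hss, hpp, hsp, hps]
            ring
          have hw0 : S *ᵥ vs - P *ᵥ vc = 0 := by
            by_contra hw
            exact absurd hww (ne_of_gt (hA.dotProduct_mulVec_pos hw))
          have : S *ᵥ vs + P *ᵥ (-vc) = 0 := by
            rw [mulVec_neg]
            rw [sub_eq_add_neg] at hw0
            exact hw0
          have := (hinj vs (-vc) this).2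
          rw [neg_eq_zero] at this
          exact hvc0 this
      exact ⟨⟨hγ0, hγlt1⟩, fun _ => ⟨vs, vc, hvs1, hvc1, hγeq.symm⟩⟩
  obtain ⟨⟨hγ0, hγlt1⟩, hattain⟩ := hcase
  have hγ2lt1 : γ ^ 2 < 1 := by nlinarith
  -- abbreviations for the iteration matrix
  set Qm := S * (Sᵀ * A * S)⁻¹ * Sᵀ * A with hQm
  set pm : Matrix (Fin n) (Fin n) ℝ := 1 - Qm with hpmdef
  set Rm : Matrix (Fin n) (Fin n) ℝ := 1 - proj A P with hRmdef
  set Em := pm * Rm * pm with hEmdef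
  have hprojdef : proj A P = P * (Pᵀ * A * P)⁻¹ * Pᵀ * A := rfl
  have hQidem : Qm * Qm = Qm := by rw [hQm]; exact Q_idem A S hA11u
  have hPiidem : proj A P * proj A P = proj A P := Q_idem A P hA22u
  have hQsa : ∀ x y : Fin n → ℝ, (Qm *ᵥ x) ⬝ᵥ A *ᵥ y = x ⬝ᵥ A *ᵥ (Qm *ᵥ y) := by
    intro x y
    rw [hQm]
    exact ip_selfadj (QtA A S hAs) x y
  have hPisa : ∀ x y : Fin n → ℝ, (proj A P *ᵥ x) ⬝ᵥ A *ᵥ y = x ⬝ᵥ A *ᵥ (proj A P *ᵥ y) :=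
    fun x y => ip_selfadj (QtA A P hAs) x y
  have hPiP : ∀ b : Fin nc → ℝ, proj A P *ᵥ (P *ᵥ b) = P *ᵥ b := by
    intro b
    rw [mulVec_mulVec, show proj A P * P = P from Q_fix A P hA22u]
  have hPiv_idem : ∀ x : Fin n → ℝ, proj A P *ᵥ (proj A P *ᵥ x) = proj A P *ᵥ x := by
    intro x; rw [mulVec_mulVec, hPiidem]
  have hQv_idem : ∀ x : Fin n → ℝ, Qm *ᵥ (Qm *ᵥ x) = Qm *ᵥ x := by
    intro x; rw [mulVec_mulVec, hQidem]
  have hkerS : ∀ x : Fin n → ℝ, Sᵀ *ᵥ (A *ᵥ (pm *ᵥ x)) = 0 := by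
    have hmz : Sᵀ * A * pm = 0 := by
      rw [hpmdef, Matrix.mul_sub, Matrix.mul_one, hQm, SAQ A S hA11u, sub_self]
    intro x
    have e : Sᵀ *ᵥ (A *ᵥ (pm *ᵥ x)) = (Sᵀ * A * pm) *ᵥ x := by
      simp only [mulVec_mulVec, Matrix.mul_assoc]
    rw [e, hmz, zero_mulVec]
  -- the key inequality
  have hkey : ∀ u : Fin n → ℝ, Sᵀ *ᵥ (A *ᵥ u) = 0 →
      (Rm *ᵥ u) ⬝ᵥ A *ᵥ (Rm *ᵥ u) ≤ γ ^ 2 * (u ⬝ᵥ A *ᵥ u) := by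
    intro u hu
    rcases eq_or_ne u 0 with rfl | hune
    · simp [Matrix.mulVec_zero]
    obtain ⟨a, b, hu_eq⟩ := hsurj u
    have hus : u ⬝ᵥ A *ᵥ (S *ᵥ a) = 0 := by
      rw [ip_symm hAs, dot_tA, hu, dotProduct_zero]
    have huu : u ⬝ᵥ A *ᵥ u = u ⬝ᵥ A *ᵥ (P *ᵥ b) := by
      have h1 : A *ᵥ u = A *ᵥ (S *ᵥ a) + A *ᵥ (P *ᵥ b) := by
        rw [hu_eq, mulVec_add]
      rw [h1, dotProduct_add]
      have h1' : A *ᵥ (S *ᵥ a) = A *ᵥ (S *ᵥ a) := rfl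
      rw [show u ⬝ᵥ A *ᵥ (S *ᵥ a) = 0 from hus]
      ring
    have h2 : u ⬝ᵥ A *ᵥ (P *ᵥ b) = (proj A P *ᵥ u) ⬝ᵥ A *ᵥ (P *ᵥ b) := by
      rw [hPisa u (P *ᵥ b), hPiP b]
    have h3 := hCS (proj A P *ᵥ u) (P *ᵥ b)
    -- CBS lower bound on the cross term
    have h4 : -(γ * (Real.sqrt ((S *ᵥ a) ⬝ᵥ A *ᵥ (S *ᵥ a)) *
        Real.sqrt ((P *ᵥ b) ⬝ᵥ A *ᵥ (P *ᵥ b)))) ≤ (S *ᵥ a) ⬝ᵥ A *ᵥ (P *ᵥ b) := by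
      have hneg := hCBS (-a) b
      rw [neg_dotProduct] at hneg
      have e1 : (-a) ⬝ᵥ (Sᵀ * A * S) *ᵥ (-a) = a ⬝ᵥ (Sᵀ * A * S) *ᵥ a := by
        rw [mulVec_neg, dotProduct_neg, neg_dotProduct, neg_neg]
      rw [e1, hconv12, hconv1, hconv2] at hneg
      linarith
    have hX2 : (Real.sqrt ((S *ᵥ a) ⬝ᵥ A *ᵥ (S *ᵥ a))) ^ 2 = (S *ᵥ a) ⬝ᵥ A *ᵥ (S *ᵥ a) :=
      Real.sq_sqrt (hnn _)
    have hY2 : (Real.sqrt ((P *ᵥ b) ⬝ᵥ A *ᵥ (P *ᵥ b))) ^ 2 = (P *ᵥ b) ⬝ᵥ A *ᵥ (P *ᵥ b) :=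
      Real.sq_sqrt (hnn _)
    have hexpand : u ⬝ᵥ A *ᵥ u = (S *ᵥ a) ⬝ᵥ A *ᵥ (S *ᵥ a) +
        2 * ((S *ᵥ a) ⬝ᵥ A *ᵥ (P *ᵥ b)) + (P *ᵥ b) ⬝ᵥ A *ᵥ (P *ᵥ b) := by
      have hcross := ip_symm hAs (P *ᵥ b) (S *ᵥ a)
      rw [hu_eq]
      simp only [mulVec_add, dotProduct_add, add_dotProduct]
      linarith
    have h5 : (1 - γ ^ 2) * ((P *ᵥ b) ⬝ᵥ A *ᵥ (P *ᵥ b)) ≤ u ⬝ᵥ A *ᵥ u := by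
      nlinarith [sq_nonneg (Real.sqrt ((S *ᵥ a) ⬝ᵥ A *ᵥ (S *ᵥ a)) -
        γ * Real.sqrt ((P *ᵥ b) ⬝ᵥ A *ᵥ (P *ᵥ b))), hX2, hY2, h4, hexpand]
    have h6 : (u ⬝ᵥ A *ᵥ u) ^ 2 ≤ ((proj A P *ᵥ u) ⬝ᵥ A *ᵥ (proj A P *ᵥ u)) *
        ((P *ᵥ b) ⬝ᵥ A *ᵥ (P *ᵥ b)) := by
      calc (u ⬝ᵥ A *ᵥ u) ^ 2 = ((proj A P *ᵥ u) ⬝ᵥ A *ᵥ (P *ᵥ b)) ^ 2 := by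
            rw [huu, h2]
        _ ≤ _ := h3
    have hupos : 0 < u ⬝ᵥ A *ᵥ u := hA.dotProduct_mulVec_pos hune
    have h7 : (1 - γ ^ 2) * (u ⬝ᵥ A *ᵥ u) ≤ (proj A P *ᵥ u) ⬝ᵥ A *ᵥ (proj A P *ᵥ u) := by
      have h8 : (1 - γ ^ 2) * (u ⬝ᵥ A *ᵥ u) * (u ⬝ᵥ A *ᵥ u) ≤
          ((proj A P *ᵥ u) ⬝ᵥ A *ᵥ (proj A P *ᵥ u)) * (u ⬝ᵥ A *ᵥ u) := by
        nlinarith [hnn (proj A P *ᵥ u), h5, h6, hupos]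
      exact le_of_mul_le_mul_right h8 hupos
    -- expand (1-Π)u energy
    have e1 : (proj A P *ᵥ u) ⬝ᵥ A *ᵥ u = u ⬝ᵥ A *ᵥ (proj A P *ᵥ u) := hPisa u u
    have e2 : (proj A P *ᵥ u) ⬝ᵥ A *ᵥ (proj A P *ᵥ u) = u ⬝ᵥ A *ᵥ (proj A P *ᵥ u) := by
      rw [hPisa u (proj A P *ᵥ u), hPiv_idem]
    have hRuexp : (Rm *ᵥ u) ⬝ᵥ A *ᵥ (Rm *ᵥ u) =
        u ⬝ᵥ A *ᵥ u - (proj A P *ᵥ u) ⬝ᵥ A *ᵥ (proj A P *ᵥ u) := by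
      have hRu : Rm *ᵥ u = u - proj A P *ᵥ u := by rw [hRmdef, sub_mulVec, one_mulVec]
      rw [hRu]
      simp only [mulVec_sub, dotProduct_sub, sub_dotProduct]
      linear_combination -e1 + 2 * e2
    linarith [h7, hRuexp]
  -- self-adjointness of pm and the B-form
  have hpmsa : ∀ x y : Fin n → ℝ, (pm *ᵥ x) ⬝ᵥ A *ᵥ y = x ⬝ᵥ A *ᵥ (pm *ᵥ y) := by
    have hmat : pmᵀ * A = A * pm := by
      rw [hpmdef, Matrix.transpose_sub, Matrix.transpose_one, Matrix.sub_mul, Matrix.mul_sub,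
        Matrix.one_mul, Matrix.mul_one, hQm, QtA A S hAs]
    exact ip_selfadj hmat
  have hPiRm0 : ∀ x : Fin n → ℝ, proj A P *ᵥ (Rm *ᵥ x) = 0 := by
    have hmat : proj A P * Rm = 0 := by
      rw [hRmdef, Matrix.mul_sub, Matrix.mul_one, hPiidem, sub_self]
    intro x
    rw [mulVec_mulVec, hmat, zero_mulVec]
  have hEmv : ∀ x : Fin n → ℝ, Em *ᵥ x = pm *ᵥ (Rm *ᵥ (pm *ᵥ x)) := by
    intro x
    rw [hEmdef, ← mulVec_mulVec, ← mulVec_mulVec]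
  have hBval : ∀ x y : Fin n → ℝ, (Em *ᵥ x) ⬝ᵥ A *ᵥ y =
      (Rm *ᵥ (pm *ᵥ x)) ⬝ᵥ A *ᵥ (Rm *ᵥ (pm *ᵥ y)) := by
    intro x y
    rw [hEmv x, hpmsa]
    have hdec : ∀ w : Fin n → ℝ, w = Rm *ᵥ w + proj A P *ᵥ w := by
      intro w
      have h' : Rm *ᵥ w = w - proj A P *ᵥ w := by
        rw [hRmdef, sub_mulVec, one_mulVec]
      rw [h']
      abel
    conv_lhs => rw [hdec (pm *ᵥ y)]
    rw [mulVec_add, dotProduct_add]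
    have hzero : (Rm *ᵥ (pm *ᵥ x)) ⬝ᵥ A *ᵥ (proj A P *ᵥ (pm *ᵥ y)) = 0 := by
      rw [← hPisa, hPiRm0, zero_dotProduct]
    rw [hzero, add_zero]
  have hBvv_le : ∀ x : Fin n → ℝ,
      (Rm *ᵥ (pm *ᵥ x)) ⬝ᵥ A *ᵥ (Rm *ᵥ (pm *ᵥ x)) ≤ γ ^ 2 * (x ⬝ᵥ A *ᵥ x) := by
    intro x
    have h1 := hkey (pm *ᵥ x) (hkerS x)
    have h2 : (pm *ᵥ x) ⬝ᵥ A *ᵥ (pm *ᵥ x) ≤ x ⬝ᵥ A *ᵥ x := by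
      have hpx : pm *ᵥ x = x - Qm *ᵥ x := by rw [hpmdef, sub_mulVec, one_mulVec]
      have e1 : (Qm *ᵥ x) ⬝ᵥ A *ᵥ x = x ⬝ᵥ A *ᵥ (Qm *ᵥ x) := hQsa x x
      have e2 : (Qm *ᵥ x) ⬝ᵥ A *ᵥ (Qm *ᵥ x) = x ⬝ᵥ A *ᵥ (Qm *ᵥ x) := by
        rw [hQsa x (Qm *ᵥ x), hQv_idem]
      have e3 : (pm *ᵥ x) ⬝ᵥ A *ᵥ (pm *ᵥ x) =
          x ⬝ᵥ A *ᵥ x - (Qm *ᵥ x) ⬝ᵥ A *ᵥ (Qm *ᵥ x) := by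
        rw [hpx]
        simp only [mulVec_sub, dotProduct_sub, sub_dotProduct]
        linear_combination -e1 + 2 * e2
      have e4 := hnn (Qm *ᵥ x)
      linarith
    calc (Rm *ᵥ (pm *ᵥ x)) ⬝ᵥ A *ᵥ (Rm *ᵥ (pm *ᵥ x))
        ≤ γ ^ 2 * ((pm *ᵥ x) ⬝ᵥ A *ᵥ (pm *ᵥ x)) := h1
      _ ≤ γ ^ 2 * (x ⬝ᵥ A *ᵥ x) := by
          apply mul_le_mul_of_nonneg_left h2 (sq_nonneg γ)
  have hAEbd : ∀ x : Fin n → ℝ,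
      (Em *ᵥ x) ⬝ᵥ A *ᵥ (Em *ᵥ x) ≤ γ ^ 4 * (x ⬝ᵥ A *ᵥ x) := by
    intro x
    have e0 : (Em *ᵥ x) ⬝ᵥ A *ᵥ (Em *ᵥ x) =
        (Rm *ᵥ (pm *ᵥ x)) ⬝ᵥ A *ᵥ (Rm *ᵥ (pm *ᵥ (Em *ᵥ x))) := hBval x (Em *ᵥ x)
    have hcs := hCS (Rm *ᵥ (pm *ᵥ x)) (Rm *ᵥ (pm *ᵥ (Em *ᵥ x)))
    have hb1 := hBvv_le x
    have hb2 := hBvv_le (Em *ᵥ x)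
    have hee := hnn (Em *ᵥ x)
    rcases eq_or_lt_of_le hee with he0 | hepos
    · rw [← he0]
      have := hnn x
      positivity
    · have m1 := mul_le_mul hb1 hb2 (hnn (Rm *ᵥ (pm *ᵥ (Em *ᵥ x))))
        (by nlinarith [hnn x, sq_nonneg γ] : (0:ℝ) ≤ γ ^ 2 * (x ⬝ᵥ A *ᵥ x))
      have m2 : ((Em *ᵥ x) ⬝ᵥ A *ᵥ (Em *ᵥ x)) * ((Em *ᵥ x) ⬝ᵥ A *ᵥ (Em *ᵥ x)) ≤
          (γ ^ 4 * (x ⬝ᵥ A *ᵥ x)) * ((Em *ᵥ x) ⬝ᵥ A *ᵥ (Em *ᵥ x)) := by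
        nlinarith [e0, hcs, m1]
      exact le_of_mul_le_mul_right m2 hepos
  -- the set of Rayleigh quotients
  have hENpos : ∀ v : Fin n → ℝ, v ≠ 0 → 0 < eNorm A v := by
    intro v hv
    exact Real.sqrt_pos.mpr (hA.dotProduct_mulVec_pos hv)
  have hENbd : ∀ v : Fin n → ℝ, eNorm A (Em *ᵥ v) ≤ γ ^ 2 * eNorm A v := by
    intro v
    unfold eNorm
    calc Real.sqrt ((Em *ᵥ v) ⬝ᵥ A *ᵥ (Em *ᵥ v)) ≤ Real.sqrt (γ ^ 4 * (v ⬝ᵥ A *ᵥ v)) :=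
          Real.sqrt_le_sqrt (hAEbd v)
      _ = γ ^ 2 * Real.sqrt (v ⬝ᵥ A *ᵥ v) := by
          rw [show (γ:ℝ) ^ 4 = (γ ^ 2) ^ 2 by ring, Real.sqrt_mul (sq_nonneg _),
            Real.sqrt_sq (sq_nonneg γ)]
  have hgoal : aNorm A Em = γ ^ 2 := by
    unfold aNorm
    apply IsGreatest.csSup_eq
    constructor
    · -- membership
      by_cases hγpos : 0 < γ
      · -- stationarity and the eigenvector
        obtain ⟨vs, vc, hvs1, hvc1, hfγ⟩ := hattain hγpos
        have hvc0 : vc ≠ 0 := by intro h; rw [h] at hvc1; simp at hvc1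
        have h11s : (Sᵀ * A * S)ᵀ = Sᵀ * A * S := by
          simp [Matrix.transpose_mul, Matrix.mul_assoc, hAs]
        have h22s : (Pᵀ * A * P)ᵀ = Pᵀ * A * P := by
          simp [Matrix.transpose_mul, Matrix.mul_assoc, hAs]
        have htr : (Sᵀ * A * P)ᵀ = Pᵀ * A * S := by
          simp [Matrix.transpose_mul, Matrix.mul_assoc, hAs]
        have hst1 : (Sᵀ * A * P) *ᵥ vc = γ • ((Sᵀ * A * S) *ᵥ vs) := by
          apply stationarity h11s hγpos hvs1 (fun a => hA11.posSemidef.dotProduct_mulVec_nonneg a)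
          · intro a
            have := hCBS a vc
            rw [hvc1, Real.sqrt_one, mul_one] at this
            exact this
          · exact hfγ
        have hst2 : (Pᵀ * A * S) *ᵥ vs = γ • ((Pᵀ * A * P) *ᵥ vc) := by
          apply stationarity h22s hγpos hvc1 (fun b => hA22.posSemidef.dotProduct_mulVec_nonneg b)
          · intro b
            have hflip : b ⬝ᵥ (Pᵀ * A * S) *ᵥ vs = vs ⬝ᵥ (Sᵀ * A * P) *ᵥ b := by
              rw [← htr, ← dot_tA, dotProduct_comm]
            rw [hflip]
            have := hCBS vs b
            rw [hvs1, Real.sqrt_one, one_mul] at this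
            exact this
          · have hflip : vc ⬝ᵥ (Pᵀ * A * S) *ᵥ vs = vs ⬝ᵥ (Sᵀ * A * P) *ᵥ vc := by
              rw [← htr, ← dot_tA, dotProduct_comm]
            rw [hflip]
            exact hfγ
        have hst1v : Sᵀ *ᵥ (A *ᵥ (P *ᵥ vc)) = γ • (Sᵀ *ᵥ (A *ᵥ (S *ᵥ vs))) := by
          have e1 : Sᵀ *ᵥ (A *ᵥ (P *ᵥ vc)) = (Sᵀ * A * P) *ᵥ vc := by
            simp only [mulVec_mulVec, Matrix.mul_assoc]
          have e2 : Sᵀ *ᵥ (A *ᵥ (S *ᵥ vs)) = (Sᵀ * A * S) *ᵥ vs := by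
            simp only [mulVec_mulVec, Matrix.mul_assoc]
          rw [e1, e2, hst1]
        have hst2v : Pᵀ *ᵥ (A *ᵥ (S *ᵥ vs)) = γ • (Pᵀ *ᵥ (A *ᵥ (P *ᵥ vc))) := by
          have e1 : Pᵀ *ᵥ (A *ᵥ (S *ᵥ vs)) = (Pᵀ * A * S) *ᵥ vs := by
            simp only [mulVec_mulVec, Matrix.mul_assoc]
          have e2 : Pᵀ *ᵥ (A *ᵥ (P *ᵥ vc)) = (Pᵀ * A * P) *ᵥ vc := by
            simp only [mulVec_mulVec, Matrix.mul_assoc]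
          rw [e1, e2, hst2]
        set v : Fin n → ℝ := P *ᵥ vc - γ • (S *ᵥ vs) with hvdef
        have hvne : v ≠ 0 := by
          intro h
          rw [hvdef, sub_eq_zero] at h
          have h2 : S *ᵥ (γ • vs) + P *ᵥ (-vc) = 0 := by
            rw [mulVec_neg, mulVec_smul, ← h, add_neg_cancel]
          have := (hinj (γ • vs) (-vc) h2).2
          rw [neg_eq_zero] at this
          exact hvc0 this
        have hQmv : ∀ w : Fin n → ℝ,
            Qm *ᵥ w = S *ᵥ ((Sᵀ * A * S)⁻¹ *ᵥ (Sᵀ *ᵥ (A *ᵥ w))) := by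
          intro w
          rw [hQm]
          simp only [mulVec_mulVec, Matrix.mul_assoc]
        have hSAv : Sᵀ *ᵥ (A *ᵥ v) = 0 := by
          rw [hvdef]
          simp only [mulVec_sub, mulVec_smul]
          rw [hst1v]
          exact sub_self _
        have hQv : Qm *ᵥ v = 0 := by
          rw [hQmv, hSAv, Matrix.mulVec_zero, Matrix.mulVec_zero]
        have hpmv : pm *ᵥ v = v := by
          rw [hpmdef, sub_mulVec, one_mulVec, hQv, sub_zero]
        have hPimv : ∀ w : Fin n → ℝ,
            proj A P *ᵥ w = P *ᵥ ((Pᵀ * A * P)⁻¹ *ᵥ (Pᵀ *ᵥ (A *ᵥ w))) := by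
          intro w
          rw [hprojdef]
          simp only [mulVec_mulVec, Matrix.mul_assoc]
        have hPAv : Pᵀ *ᵥ (A *ᵥ v) = (1 - γ ^ 2) • ((Pᵀ * A * P) *ᵥ vc) := by
          rw [hvdef]
          simp only [mulVec_sub, mulVec_smul]
          rw [hst2v]
          have e2 : Pᵀ *ᵥ (A *ᵥ (P *ᵥ vc)) = (Pᵀ * A * P) *ᵥ vc := by
            simp only [mulVec_mulVec, Matrix.mul_assoc]
          rw [e2]
          funext i
          simp only [Pi.sub_apply, Pi.smul_apply, smul_eq_mul]
          ring
        have hPiv : proj A P *ᵥ v = (1 - γ ^ 2) • (P *ᵥ vc) := by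
          rw [hPimv, hPAv, mulVec_smul,
            show (Pᵀ * A * P)⁻¹ *ᵥ ((Pᵀ * A * P) *ᵥ vc) = vc from by
              rw [mulVec_mulVec, Matrix.nonsing_inv_mul _ hA22u, one_mulVec],
            mulVec_smul]
        have hRv : Rm *ᵥ v = γ • (γ • (P *ᵥ vc) - S *ᵥ vs) := by
          rw [hRmdef, sub_mulVec, one_mulVec, hPiv, hvdef]
          funext i
          simp only [Pi.sub_apply, Pi.smul_apply, smul_eq_mul]
          ring
        have hSAw : Sᵀ *ᵥ (A *ᵥ (γ • (γ • (P *ᵥ vc) - S *ᵥ vs)))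
            = (γ * (γ ^ 2 - 1)) • ((Sᵀ * A * S) *ᵥ vs) := by
          simp only [mulVec_smul, mulVec_sub]
          rw [hst1v]
          have e2 : Sᵀ *ᵥ (A *ᵥ (S *ᵥ vs)) = (Sᵀ * A * S) *ᵥ vs := by
            simp only [mulVec_mulVec, Matrix.mul_assoc]
          rw [e2]
          funext i
          simp only [Pi.sub_apply, Pi.smul_apply, smul_eq_mul]
          ring
        have hQw : Qm *ᵥ (γ • (γ • (P *ᵥ vc) - S *ᵥ vs))
            = (γ * (γ ^ 2 - 1)) • (S *ᵥ vs) := by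
          rw [hQmv, hSAw, mulVec_smul,
            show (Sᵀ * A * S)⁻¹ *ᵥ ((Sᵀ * A * S) *ᵥ vs) = vs from by
              rw [mulVec_mulVec, Matrix.nonsing_inv_mul _ hA11u, one_mulVec],
            mulVec_smul]
        have hEv : Em *ᵥ v = (γ ^ 2) • v := by
          rw [hEmv, hpmv, hRv, hpmdef, sub_mulVec, one_mulVec, hQw, hvdef]
          funext i
          simp only [Pi.sub_apply, Pi.smul_apply, smul_eq_mul]
          ring
        refine ⟨v, hvne, ?_⟩
        rw [hEv]
        unfold eNorm
        rw [show (γ ^ 2 • v) ⬝ᵥ A *ᵥ (γ ^ 2 • v) = (γ ^ 2) ^ 2 * (v ⬝ᵥ A *ᵥ v) from by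
          rw [mulVec_smul, smul_dotProduct, dotProduct_smul, smul_eq_mul, smul_eq_mul]; ring]
        rw [Real.sqrt_mul (sq_nonneg _), Real.sqrt_sq (sq_nonneg γ)]
        have hvpos : 0 < Real.sqrt (v ⬝ᵥ A *ᵥ v) := Real.sqrt_pos.mpr (hA.dotProduct_mulVec_pos hvne)
        field_simp
      · -- γ = 0
        have hγz : γ = 0 := le_antisymm (not_lt.mp hγpos) hγ0
        have hv0 : (Pi.single ⟨0, hn⟩ 1 : Fin n → ℝ) ≠ 0 := by
          intro h
          have := congrFun h ⟨0, hn⟩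
          simp at this
        refine ⟨Pi.single ⟨0, hn⟩ 1, hv0, ?_⟩
        have hEz : eNorm A (Em *ᵥ Pi.single ⟨0, hn⟩ 1) = 0 := by
          have h1 := hENbd (Pi.single ⟨0, hn⟩ 1)
          rw [hγz] at h1
          simp only [ne_eq, OfNat.ofNat_ne_zero, not_false_eq_true, zero_pow, zero_mul] at h1
          have h2 : 0 ≤ eNorm A (Em *ᵥ Pi.single ⟨0, hn⟩ 1) := Real.sqrt_nonneg _
          linarith
        rw [hEz, hγz, zero_div]
        norm_num
    · -- upper bound
      rintro r ⟨v, hv, rfl⟩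
      rw [div_le_iff₀ (hENpos v hv)]
      exact hENbd v
  exact hgoal
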